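/- arXiv:1001.0074 — 4 statements merged into one kernel-verified Lean document; each statement's English description precedes it below -/
import Mathlib

section
/- Let m, n ≥ 0 and let λ be a partition. There exists a hook tableau of shape λ in the alphabet 1̄ < ⋯ < m̄ < 1 < ⋯ < n if and only if λ_{m+1} ≤ n. -/
noncomputable section

open scoped Classical

namespace Stmt4

/-- Position of a letter in the totally ordered alphabet
`1̄ < ⋯ < m̄ < 1 < ⋯ < n` (barred letters `Sum.inl`, unbarred letters `Sum.inr`). -/
def code (m n : ℕ) : Fin m ⊕ Fin n → ℕ
  | Sum.inl a => (a : ℕ)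
  | Sum.inr b => m + (b : ℕ)

/-- A hook tableau of shape `μ`: entries weakly increase along rows and columns,
barred entries strictly increase down columns, unbarred entries strictly increase
along rows. Cells `(i, j)` have row index `i` and column index `j`. -/
def IsHookTableau (m n : ℕ) (μ : YoungDiagram)
    (f : {c // c ∈ μ.cells} → Fin m ⊕ Fin n) : Prop :=
  (∀ c c' : {c // c ∈ μ.cells},
      (c : ℕ × ℕ).1 = (c' : ℕ × ℕ).1 → (c : ℕ × ℕ).2 ≤ (c' : ℕ × ℕ).2 →
      code m n (f c) ≤ code m n (f c')) ∧
  (∀ c c' : {c // c ∈ μ.cells},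
      (c : ℕ × ℕ).2 = (c' : ℕ × ℕ).2 → (c : ℕ × ℕ).1 ≤ (c' : ℕ × ℕ).1 →
      code m n (f c) ≤ code m n (f c')) ∧
  (∀ c c' : {c // c ∈ μ.cells},
      (c : ℕ × ℕ).2 = (c' : ℕ × ℕ).2 → (c : ℕ × ℕ).1 < (c' : ℕ × ℕ).1 →
      (f c).isLeft → (f c').isLeft → code m n (f c) < code m n (f c')) ∧
  (∀ c c' : {c // c ∈ μ.cells},
      (c : ℕ × ℕ).1 = (c' : ℕ × ℕ).1 → (c : ℕ × ℕ).2 < (c' : ℕ × ℕ).2 →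
      (f c).isRight → (f c').isRight → code m n (f c) < code m n (f c'))

/-- The (finite) set of hook tableaux of shape `μ`. -/
def hookTableaux (m n : ℕ) (μ : YoungDiagram) :
    Finset ({c // c ∈ μ.cells} → Fin m ⊕ Fin n) :=
  Finset.univ.filter (IsHookTableau m n μ)

/-- The hook Schur polynomial `hs_μ(x_1,…,x_m; y_1,…,y_n)`: the generating function
of hook tableaux of shape `μ`, with `x_a = X (Sum.inl a)` and `y_b = X (Sum.inr b)`. -/
def hookSchur (m n : ℕ) (μ : YoungDiagram) : MvPolynomial (Fin m ⊕ Fin n) ℤ :=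
  ∑ f ∈ hookTableaux m n μ, ∏ c, MvPolynomial.X (f c)

/-- Semistandardness of a filling of a (skew) set of cells by entries in `Fin N`:
rows weakly increase, columns strictly increase. -/
def IsSemistandard {N : ℕ} (cs : Finset (ℕ × ℕ)) (f : {c // c ∈ cs} → Fin N) : Prop :=
  (∀ c c' : {c // c ∈ cs},
      (c : ℕ × ℕ).1 = (c' : ℕ × ℕ).1 → (c : ℕ × ℕ).2 ≤ (c' : ℕ × ℕ).2 → f c ≤ f c') ∧
  (∀ c c' : {c // c ∈ cs},
      (c : ℕ × ℕ).2 = (c' : ℕ × ℕ).2 → (c : ℕ × ℕ).1 < (c' : ℕ × ℕ).1 → f c < f c')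

/-- Generating function of semistandard fillings of a set of cells in `N` variables. -/
def genSchur (N : ℕ) (cs : Finset (ℕ × ℕ)) : MvPolynomial (Fin N) ℤ :=
  ∑ f ∈ Finset.univ.filter (IsSemistandard (N := N) cs), ∏ c, MvPolynomial.X (f c)

/-- The Schur polynomial `s_μ(z_1,…,z_N)`. -/
def schurPoly (N : ℕ) (μ : YoungDiagram) : MvPolynomial (Fin N) ℤ :=
  genSchur N μ.cells

/-- The skew Schur polynomial `s_{θ/κ}(z_1,…,z_N)`. -/
def skewSchur (N : ℕ) (θ κ : YoungDiagram) : MvPolynomial (Fin N) ℤ :=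
  genSchur N (θ.cells \ κ.cells)

/-- The Young diagram of a partition of `d`. -/
def toYoung {d : ℕ} (p : Nat.Partition d) : YoungDiagram :=
  YoungDiagram.ofRowLens (p.parts.sort (· ≥ ·)) (List.Pairwise.sortedGE (Multiset.pairwise_sort _ _))

/-- A hook tableau of shape `λ` in the alphabet `1̄ < ⋯ < m̄ < 1 < ⋯ < n` exists
if and only if `λ_{m+1} ≤ n` (i.e. `λ` is an `(m|n)`-hook partition); here
`λ_{m+1} = rowLen m` since rows are indexed from `0`. -/
theorem statement4 (m n : ℕ) (μ : YoungDiagram) :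
    (∃ f : {c // c ∈ μ.cells} → Fin m ⊕ Fin n, IsHookTableau m n μ f) ↔
      μ.rowLen m ≤ n := by
  constructor
  · rintro ⟨f, hrow, hcol, hbar, hunb⟩
    by_contra hn
    push_neg at hn
    have hcell : ∀ i j : ℕ, i ≤ m → j ≤ n → (i, j) ∈ μ := fun i j hi hj =>
      μ.up_left_mem hi hj (YoungDiagram.mem_iff_lt_rowLen.mpr hn)
    set C : ∀ i j : ℕ, i ≤ m → j ≤ n → {c // c ∈ μ.cells} := fun i j hi hj =>
      ⟨(i, j), (μ.mem_cells _).mpr (hcell i j hi hj)⟩ with hC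
    have code_lt_left : ∀ s : Fin m ⊕ Fin n, code m n s < m → s.isLeft := by
      rintro (a | b) h
      · rfl
      · simp [code] at h
    have code_ge_right : ∀ s : Fin m ⊕ Fin n, m ≤ code m n s → s.isRight := by
      rintro (a | b) h
      · have := a.2; simp [code] at h; omega
      · rfl
    rcases lt_or_ge (code m n (f (C m 0 le_rfl (Nat.zero_le n)))) m with h0 | h0
    · -- the first column consists of m+1 barred, strictly increasing letters
      have hle : ∀ i (hi : i ≤ m),
          code m n (f (C i 0 hi (Nat.zero_le n))) ≤
            code m n (f (C m 0 le_rfl (Nat.zero_le n))) := by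
        intro i hi
        exact hcol (C i 0 hi (Nat.zero_le n)) (C m 0 le_rfl (Nat.zero_le n)) rfl hi
      have hlt : ∀ i (hi : i ≤ m), code m n (f (C i 0 hi (Nat.zero_le n))) < m :=
        fun i hi => lt_of_le_of_lt (hle i hi) h0
      have hleft : ∀ i (hi : i ≤ m), (f (C i 0 hi (Nat.zero_le n))).isLeft :=
        fun i hi => code_lt_left _ (hlt i hi)
      have hmono : StrictMono (fun i : Fin (m + 1) =>
          (⟨code m n (f (C i 0 (Nat.lt_succ_iff.mp i.2) (Nat.zero_le n))),
            hlt _ (Nat.lt_succ_iff.mp i.2)⟩ : Fin m)) := by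
        intro i i' hii
        exact Fin.mk_lt_mk.mpr
          (hbar (C i 0 (Nat.lt_succ_iff.mp i.2) (Nat.zero_le n))
            (C i' 0 (Nat.lt_succ_iff.mp i'.2) (Nat.zero_le n)) rfl hii
            (hleft _ (Nat.lt_succ_iff.mp i.2)) (hleft _ (Nat.lt_succ_iff.mp i'.2)))
      have := Fintype.card_le_of_injective _ hmono.injective
      simp at this
    · -- row m consists of n+1 unbarred, strictly increasing letters
      have hge : ∀ j (hj : j ≤ n), m ≤ code m n (f (C m j le_rfl hj)) := by
        intro j hj
        exact le_trans h0
          (hrow (C m 0 le_rfl (Nat.zero_le n)) (C m j le_rfl hj) rfl (Nat.zero_le j))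
      have hright : ∀ j (hj : j ≤ n), (f (C m j le_rfl hj)).isRight :=
        fun j hj => code_ge_right _ (hge j hj)
      have hlt' : ∀ j (hj : j ≤ n), code m n (f (C m j le_rfl hj)) - m < n := by
        intro j hj
        rcases hs : f (C m j le_rfl hj) with a | b
        · have := hright j hj; rw [hs] at this; simp at this
        · simp [hs, code]
      have hmono : StrictMono (fun j : Fin (n + 1) =>
          (⟨code m n (f (C m j le_rfl (Nat.lt_succ_iff.mp j.2))) - m,
            hlt' _ (Nat.lt_succ_iff.mp j.2)⟩ : Fin n)) := by
        intro j j' hjj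
        have h1 := hge j (Nat.lt_succ_iff.mp j.2)
        have h2 := hunb (C m j le_rfl (Nat.lt_succ_iff.mp j.2))
          (C m j' le_rfl (Nat.lt_succ_iff.mp j'.2)) rfl hjj
          (hright _ (Nat.lt_succ_iff.mp j.2)) (hright _ (Nat.lt_succ_iff.mp j'.2))
        exact Fin.mk_lt_mk.mpr (by omega)
      have := Fintype.card_le_of_injective _ hmono.injective
      simp at this
  · intro hn
    have key : ∀ c : {c // c ∈ μ.cells}, m ≤ (c : ℕ × ℕ).1 → (c : ℕ × ℕ).2 < n := by
      intro c hc
      have hmem : ((c : ℕ × ℕ).1, (c : ℕ × ℕ).2) ∈ μ := (μ.mem_cells _).mp c.2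
      have h1 : (c : ℕ × ℕ).2 < μ.rowLen (c : ℕ × ℕ).1 :=
        YoungDiagram.mem_iff_lt_rowLen.mp hmem
      exact lt_of_lt_of_le h1 (le_trans (μ.rowLen_anti _ _ hc) hn)
    refine ⟨fun c => if h : (c : ℕ × ℕ).1 < m then Sum.inl ⟨(c : ℕ × ℕ).1, h⟩
      else Sum.inr ⟨(c : ℕ × ℕ).2, key c (le_of_not_gt h)⟩, ?_, ?_, ?_, ?_⟩
    · intro c c' h1 h2
      dsimp only
      by_cases h : (c : ℕ × ℕ).1 < m
      · rw [dif_pos h, dif_pos (h1 ▸ h)]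
        simp [code, h1]
      · rw [dif_neg h, dif_neg (h1 ▸ h)]
        simp [code, h2]
    · intro c c' h1 h2
      dsimp only
      by_cases h : (c : ℕ × ℕ).1 < m
      · by_cases h' : (c' : ℕ × ℕ).1 < m
        · rw [dif_pos h, dif_pos h']; simp [code, h2]
        · rw [dif_pos h, dif_neg h']; simp [code]; omega
      · have h' : ¬ (c' : ℕ × ℕ).1 < m := fun hh => h (lt_of_le_of_lt h2 hh)
        rw [dif_neg h, dif_neg h']
        simp [code, h1]
    · intro c c' h1 h2 hl hl'
      dsimp only at hl hl' ⊢
      by_cases h : (c : ℕ × ℕ).1 < m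
      · by_cases h' : (c' : ℕ × ℕ).1 < m
        · rw [dif_pos h, dif_pos h']; simpa [code] using h2
        · rw [dif_neg h'] at hl'; simp at hl'
      · rw [dif_neg h] at hl; simp at hl
    · intro c c' h1 h2 hr hr'
      dsimp only at hr hr' ⊢
      by_cases h : (c : ℕ × ℕ).1 < m
      · rw [dif_pos h] at hr; simp at hr
      · rw [dif_neg h, dif_neg (h1 ▸ h)]
        simpa [code] using h2

end Stmt4
end
end

section
/- Let m, n ≥ 0 and let λ be an (m|n)-hook partition, i.e. λ_{m+1} ≤ n. Set ν_j = max(λ'_j − m, 0) for 1 ≤ j ≤ n, where λ' is the conjugate partition. Let atyp(λ) be the largest r for which there exist pairs (i_1,j_1),…,(i_r,j_r) ∈ {1,…,m}×{1,…,n} with i_1,…,i_r pairwise distinct, j_1,…,j_r pairwise distinct, and λ_{i_t} + ν_{j_t} = i_t + j_t − m − 1 for every t. Then atyp(λ) equals the least i ∈ {0,1,…,min(m,n)} such that λ_{m−i} ≥ n−i, where this condition is interpreted as vacuously true when m−i = 0 (such an i always exists since i = min(m,n) works). -/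
/-- For an `(m|n)`-hook partition `λ` (given as a Young diagram, rows and columns
indexed from `0`, so that `λ_{i+1} = rowLen i` and `λ'_{j+1} = colLen j`), the
degree of atypicality of `λ^♮` — the largest `r` admitting pairwise distinct
`i_1,…,i_r ∈ {1,…,m}` and pairwise distinct `j_1,…,j_r ∈ {1,…,n}` with
`λ_{i_t} + ν_{j_t} = i_t + j_t - m - 1` where `ν_j = max(λ'_j - m, 0)` — equals
the least `i ≤ min m n` with `λ_{m-i} ≥ n-i` (vacuously true when `m - i = 0`). -/
theorem statement8 (m n : ℕ) (lam : YoungDiagram) (hhook : lam.rowLen m ≤ n) :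
    ∀ a : ℕ,
      IsGreatest {r : ℕ | ∃ (I : Fin r → Fin m) (J : Fin r → Fin n),
          Function.Injective I ∧ Function.Injective J ∧
          ∀ t : Fin r,
            (lam.rowLen (I t) : ℤ) + ((lam.colLen (J t) - m : ℕ) : ℤ) =
              ((I t : ℕ) : ℤ) + ((J t : ℕ) : ℤ) + 1 - (m : ℤ)} a →
      IsLeast {i : ℕ | i ≤ min m n ∧ (m - i = 0 ∨ n - i ≤ lam.rowLen (m - i - 1))} a := by
  classical
  set C : Finset ℕ := (Finset.range m).filter (fun i => lam.rowLen i + m ≤ n + i) with hC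
  set k : ℕ := C.card with hk
  have hmemC : ∀ i, i ∈ C ↔ i < m ∧ lam.rowLen i + m ≤ n + i := by
    intro i; simp [hC, Finset.mem_filter, Finset.mem_range]
  have hkm : k ≤ m := by
    calc k ≤ (Finset.range m).card := Finset.card_le_card (Finset.filter_subset _ _)
    _ = m := Finset.card_range m
  -- C is a final segment
  have hCIco : C = Finset.Ico (m - k) m := by
    have hsub : C ⊆ Finset.Ico (m - k) m := by
      intro i hi
      rw [hmemC] at hi
      have hsub2 : Finset.Ico i m ⊆ C := by
        intro i' hi'
        rw [Finset.mem_Ico] at hi'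
        rw [hmemC]
        have := lam.rowLen_anti i i' hi'.1
        exact ⟨hi'.2, by omega⟩
      have := Finset.card_le_card hsub2
      rw [Nat.card_Ico] at this
      rw [Finset.mem_Ico]
      omega
    refine Finset.eq_of_subset_of_card_le hsub ?_
    rw [Nat.card_Ico, ← hk]
    omega
  -- every valid pair has its row in C, and the column is determined
  have hpair : ∀ i j : ℕ, i < m → j < n →
      (lam.rowLen i : ℤ) + ((lam.colLen j - m : ℕ) : ℤ) = (i : ℤ) + (j : ℤ) + 1 - (m : ℤ) →
      i ∈ C ∧ j = lam.rowLen i + (m - 1 - i) := by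
    intro i j him hjn heq
    rcases le_or_gt (lam.colLen j) m with hle | hgt
    · have h0 : lam.colLen j - m = 0 := by omega
      rw [h0] at heq
      rw [hmemC]
      refine ⟨⟨him, by omega⟩, by omega⟩
    · exfalso
      have hmem : (i, j) ∈ lam := by
        rw [YoungDiagram.mem_iff_lt_colLen]; omega
      rw [YoungDiagram.mem_iff_lt_rowLen] at hmem
      omega
  -- k is an upper bound for the atypicality set
  have hub : ∀ r ∈ {r : ℕ | ∃ (I : Fin r → Fin m) (J : Fin r → Fin n),
          Function.Injective I ∧ Function.Injective J ∧
          ∀ t : Fin r,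
            (lam.rowLen (I t) : ℤ) + ((lam.colLen (J t) - m : ℕ) : ℤ) =
              ((I t : ℕ) : ℤ) + ((J t : ℕ) : ℤ) + 1 - (m : ℤ)}, r ≤ k := by
    rintro r ⟨I, J, hI, hJ, heq⟩
    have hIC : ∀ t : Fin r, (I t : ℕ) ∈ C := by
      intro t
      exact (hpair (I t) (J t) (I t).2 (J t).2 (heq t)).1
    have hinj : Function.Injective (fun t : Fin r => (⟨(I t : ℕ), hIC t⟩ : ↥C)) := by
      intro t t' h
      apply hI
      apply Fin.ext
      exact congrArg Subtype.val h
    calc r = Fintype.card (Fin r) := (Fintype.card_fin r).symm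
    _ ≤ Fintype.card ↥C := Fintype.card_le_of_injective _ hinj
    _ = k := by rw [Fintype.card_coe]
  -- k is attained
  have hmemS : ∃ (I : Fin k → Fin m) (J : Fin k → Fin n),
          Function.Injective I ∧ Function.Injective J ∧
          ∀ t : Fin k,
            (lam.rowLen (I t) : ℤ) + ((lam.colLen (J t) - m : ℕ) : ℤ) =
              ((I t : ℕ) : ℤ) + ((J t : ℕ) : ℤ) + 1 - (m : ℤ) := by
    have e := C.orderIsoOfFin (hk.symm)
    have hCm : ∀ t : Fin k, ((e t : ℕ) < m ∧ lam.rowLen (e t : ℕ) + m ≤ n + (e t : ℕ)) := by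
      intro t
      exact (hmemC _).mp (e t).2
    refine ⟨fun t => ⟨(e t : ℕ), (hCm t).1⟩,
      fun t => ⟨lam.rowLen (e t : ℕ) + (m - 1 - (e t : ℕ)), by have := hCm t; omega⟩, ?_, ?_, ?_⟩
    · intro t t' h
      have : (e t : ℕ) = (e t' : ℕ) := congrArg Fin.val h
      exact e.injective (Subtype.ext this)
    · intro t t' h
      have h' : lam.rowLen (e t : ℕ) + (m - 1 - (e t : ℕ))
          = lam.rowLen (e t' : ℕ) + (m - 1 - (e t' : ℕ)) := congrArg Fin.val h
      have h1 := hCm t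
      have h2 := hCm t'
      apply e.injective
      apply Subtype.ext
      rcases lt_trichotomy ((e t : ℕ)) ((e t' : ℕ)) with hlt | heqq | hgt
      · have := lam.rowLen_anti _ _ (le_of_lt hlt); omega
      · exact heqq
      · have := lam.rowLen_anti _ _ (le_of_lt hgt); omega
    · intro t
      have h1 := hCm t
      set i := (e t : ℕ)
      set j := lam.rowLen i + (m - 1 - i) with hj
      have hrm : lam.rowLen m ≤ j := by
        have := lam.rowLen_anti i m (le_of_lt h1.1)
        omega
      have hcol : lam.colLen j ≤ m := by
        by_contra hcon
        have hmem : (m, j) ∈ lam := by rw [YoungDiagram.mem_iff_lt_colLen]; omega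
        rw [YoungDiagram.mem_iff_lt_rowLen] at hmem
        omega
      have h0 : lam.colLen j - m = 0 := by omega
      show (lam.rowLen i : ℤ) + ((lam.colLen j - m : ℕ) : ℤ) = (i : ℤ) + (j : ℤ) + 1 - (m : ℤ)
      simp only [h0]
      push_cast
      omega
  -- least element of the target set
  have hleast : IsLeast {i : ℕ | i ≤ min m n ∧ (m - i = 0 ∨ n - i ≤ lam.rowLen (m - i - 1))} k := by
    constructor
    · constructor
      · have hkn : k ≤ n := by
          rcases Nat.eq_zero_or_pos k with h0 | hpos
          · omega
          · have : m - k ∈ C := by rw [hCIco, Finset.mem_Ico]; omega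
            rw [hmemC] at this
            omega
        omega
      · rcases Nat.eq_or_lt_of_le hkm with he | hlt
        · left; omega
        · right
          have : m - k - 1 ∉ C := by rw [hCIco, Finset.mem_Ico]; omega
          rw [hmemC] at this
          push_neg at this
          have h2 := this (by omega)
          omega
    · intro i hi
      by_contra hcon
      push_neg at hcon
      obtain ⟨himn, hor⟩ := hi
      have hne : m - i ≠ 0 := by omega
      have hrl : n - i ≤ lam.rowLen (m - i - 1) := by tauto
      have : m - i - 1 ∈ C := by rw [hCIco, Finset.mem_Ico]; omega
      rw [hmemC] at this
      omega
  intro a ha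
  have : a = k := ha.unique ⟨hmemS, hub⟩
  rw [this]
  exact hleast
end

section
/- Let m, n ≥ 1 and let λ be an (m|n)-hook partition, i.e. λ_{m+1} ≤ n. Set ν_j = max(λ'_j − m, 0) for 1 ≤ j ≤ n, where λ' is the conjugate partition. Then there exists no pair (i,j) ∈ {1,…,m}×{1,…,n} with λ_i + ν_j = i + j − m − 1 if and only if λ_m ≥ n. -/
/-- Typicality criterion: for an `(m|n)`-hook partition `λ` (as a Young diagram,
rows/columns indexed from `0`, `λ_{i+1} = rowLen i`, `λ'_{j+1} = colLen j`,
`ν_j = max(λ'_j - m, 0)`), there is no pair `(i,j) ∈ {1,…,m} × {1,…,n}` with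
`λ_i + ν_j = i + j - m - 1` if and only if `λ_m ≥ n`. -/
theorem statement9 (m n : ℕ) (hm : 1 ≤ m) (hn : 1 ≤ n) (lam : YoungDiagram)
    (hhook : lam.rowLen m ≤ n) :
    (¬ ∃ (i : Fin m) (j : Fin n),
        (lam.rowLen i : ℤ) + ((lam.colLen j - m : ℕ) : ℤ) =
          ((i : ℕ) : ℤ) + ((j : ℕ) : ℤ) + 1 - (m : ℤ)) ↔
      n ≤ lam.rowLen (m - 1) := by
  constructor
  · intro h
    by_contra hlt
    push_neg at hlt
    apply h
    refine ⟨⟨m - 1, by omega⟩, ⟨lam.rowLen (m - 1), hlt⟩, ?_⟩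
    have hcol : lam.colLen (lam.rowLen (m - 1)) ≤ m - 1 := by
      by_contra hc
      push_neg at hc
      have hmem := (lam.mem_iff_lt_colLen).mpr hc
      rw [lam.mem_iff_lt_rowLen] at hmem
      omega
    simp only
    omega
  · rintro hge ⟨i, j, heq⟩
    have h1 : n ≤ lam.rowLen i :=
      le_trans hge (lam.rowLen_anti i (m - 1) (by omega))
    have hi := i.isLt
    have hj := j.isLt
    omega
end

section
/- Fix m, n ≥ 0 and let e_1,…,e_{m+n} be the standard basis of ℚ^{m+n}, with symmetric bilinear form B(e_i,e_i) = 1 for i ≤ m, B(e_i,e_i) = −1 for i > m, and B(e_i,e_j) = 0 for i ≠ j. Call a vector e_i − e_j odd if exactly one of i, j is ≤ m. Let Φ = {e_i − e_j : 1 ≤ i ≠ j ≤ m+n}. Call a subset Φ⁺ ⊆ Φ a positive system if Φ⁺ ∩ (−Φ⁺) = ∅, Φ⁺ ∪ (−Φ⁺) = Φ, and whenever α, β ∈ Φ⁺ with α+β ∈ Φ one has α+β ∈ Φ⁺; let Π be the set of indecomposable elements of Φ⁺ (the elements not expressible as a sum of two elements of Φ⁺). Suppose α ∈ Π is odd (hence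 isotropic: B(α,α) = 0). Then Φ(α)⁺ := (Φ⁺ \ {α}) ∪ {−α} is again a positive system, and its set of indecomposable elements equals {β ∈ Π : β ≠ α, B(β,α) = 0} ∪ {β + α : β ∈ Π, B(β,α) ≠ 0} ∪ {−α}. -/
noncomputable section

namespace Stmt13

/-- The standard basis vector `e_i` of `ℚ^{m+n}`. -/
def e (m n : ℕ) (i : Fin (m + n)) : Fin (m + n) → ℚ := Pi.single i 1

/-- The supertrace bilinear form: `B(e_i, e_i) = 1` for `i ≤ m`, `= -1` for `i > m`,
and `B(e_i, e_j) = 0` for `i ≠ j`. -/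
def B (m n : ℕ) (v w : Fin (m + n) → ℚ) : ℚ :=
  ∑ i : Fin (m + n), (if (i : ℕ) < m then 1 else -1) * v i * w i

/-- The root system `Φ = {e_i - e_j : i ≠ j}` of `gl(m|n)`. -/
def Phi (m n : ℕ) : Set (Fin (m + n) → ℚ) :=
  {v | ∃ i j, i ≠ j ∧ v = e m n i - e m n j}

/-- `e_i - e_j` is odd when exactly one of `i, j` is `≤ m`. -/
def IsOddRoot (m n : ℕ) (v : Fin (m + n) → ℚ) : Prop :=
  ∃ i j, i ≠ j ∧ v = e m n i - e m n j ∧ ¬(((i : ℕ) < m) ↔ ((j : ℕ) < m))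

/-- A positive system in `Φ`. -/
def IsPositiveSystem (m n : ℕ) (P : Set (Fin (m + n) → ℚ)) : Prop :=
  P ⊆ Phi m n ∧
  P ∩ (Neg.neg '' P) = ∅ ∧
  P ∪ (Neg.neg '' P) = Phi m n ∧
  ∀ a ∈ P, ∀ b ∈ P, a + b ∈ Phi m n → a + b ∈ P

/-- The indecomposable elements (simple roots) of a positive system. -/
def indec (m n : ℕ) (P : Set (Fin (m + n) → ℚ)) : Set (Fin (m + n) → ℚ) :=
  {a | a ∈ P ∧ ¬ ∃ b ∈ P, ∃ c ∈ P, a = b + c}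

variable {m n : ℕ}

lemma e_apply (i x : Fin (m + n)) : e m n i x = if x = i then 1 else 0 := by
  simp [e, Pi.single_apply]

lemma root_apply (i j x : Fin (m + n)) :
    (e m n i - e m n j) x = (if x = i then 1 else 0) - (if x = j then 1 else 0) := by
  simp [e_apply]

lemma root_ne_zero {i j : Fin (m+n)} (h : i ≠ j) : e m n i - e m n j ≠ 0 := by
  intro hv
  have := congrFun hv i
  rw [root_apply] at this
  simp [h] at this

lemma root_eq_iff {i j k l : Fin (m+n)} (hij : i ≠ j) (hkl : k ≠ l) :
    e m n i - e m n j = e m n k - e m n l ↔ i = k ∧ j = l := by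
  constructor
  · intro h
    have h1 := congrFun h i
    have h2 := congrFun h j
    rw [root_apply, root_apply] at h1 h2
    simp only [if_pos rfl, if_neg hij, if_neg (Ne.symm hij)] at h1 h2
    constructor
    · by_contra hik
      rw [if_neg hik] at h1
      split_ifs at h1 <;> norm_num at h1
    · by_contra hjl
      rw [if_neg hjl] at h2
      split_ifs at h2 <;> norm_num at h2
  · rintro ⟨rfl, rfl⟩; rfl

lemma sum_root {i j k l a b : Fin (m+n)} (hij : i ≠ j) (hkl : k ≠ l) (hab : a ≠ b)
    (h : e m n i - e m n j + (e m n k - e m n l) = e m n a - e m n b) :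
    (j = k ∧ a = i ∧ b = l) ∨ (i = l ∧ a = k ∧ b = j) := by
  by_cases hjk : j = k
  · subst hjk
    left
    refine ⟨rfl, ?_⟩
    have hil : i ≠ l := by
      rintro rfl
      have : (0 : Fin (m+n) → ℚ) = e m n a - e m n b := by rw [← h]; abel
      exact root_ne_zero hab this.symm
    have := (root_eq_iff hil hab).mp (by rw [← h]; abel)
    exact ⟨this.1.symm, this.2.symm⟩
  · right
    have hil : i = l := by
      by_contra hil
      have h1 := congrFun h j
      have h2 := congrFun h l
      rw [Pi.add_apply, root_apply, root_apply, root_apply] at h1 h2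
      simp only [if_neg (Ne.symm hij), if_pos rfl, if_neg hjk] at h1
      simp only [if_neg (fun hh : l = i => hil hh.symm), if_neg (Ne.symm hkl), if_pos rfl] at h2
      have hjl : j ≠ l := by
        intro hh; rw [if_pos hh] at h1
        split_ifs at h1 <;> norm_num at h1
      rw [if_neg hjl] at h1
      rw [if_neg (Ne.symm hjl)] at h2
      have hjb : j = b := by
        by_contra hh; rw [if_neg hh] at h1
        split_ifs at h1 <;> norm_num at h1
      have hlb : l = b := by
        by_contra hh; rw [if_neg hh] at h2
        split_ifs at h2 <;> norm_num at h2
      exact hjl (hjb.trans hlb.symm)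
    subst hil
    refine ⟨rfl, ?_⟩
    have hkj : k ≠ j := fun hh => hjk hh.symm
    have := (root_eq_iff hkj hab).mp (by rw [← h]; abel)
    exact ⟨this.1.symm, this.2.symm⟩

lemma B_root (v : Fin (m+n) → ℚ) {p q : Fin (m+n)} (hpq : p ≠ q) :
    B m n v (e m n p - e m n q)
      = (if (p:ℕ) < m then 1 else -1) * v p - (if (q:ℕ) < m then 1 else -1) * v q := by
  unfold B
  have key : ∀ x : Fin (m+n), (if (x : ℕ) < m then (1:ℚ) else -1) * v x * ((e m n p - e m n q) x)
      = (if x = p then (if (p:ℕ) < m then (1:ℚ) else -1) * v p else 0)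
        - (if x = q then (if (q:ℕ) < m then (1:ℚ) else -1) * v q else 0) := by
    intro x
    rw [root_apply]
    by_cases h1 : x = p
    · subst h1
      rw [if_pos rfl, if_pos rfl, if_neg (fun hh : x = q => hpq hh), if_neg (fun hh : x = q => hpq hh)]
      ring
    · rw [if_neg h1, if_neg h1]
      by_cases h2 : x = q
      · subst h2; rw [if_pos rfl, if_pos rfl]; ring
      · rw [if_neg h2, if_neg h2]; ring
  simp only [key, Finset.sum_sub_distrib, Finset.sum_ite_eq', Finset.mem_univ, if_pos]

/-! ### The order relation of a positive system -/

def rel (m n : ℕ) (P : Set (Fin (m + n) → ℚ)) (i j : Fin (m+n)) : Prop :=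
  e m n i - e m n j ∈ P

variable {P : Set (Fin (m + n) → ℚ)}

lemma rel_ne (hP : IsPositiveSystem m n P) {i j : Fin (m+n)} (h : rel m n P i j) : i ≠ j := by
  rintro rfl
  obtain ⟨a, b, hab, h0⟩ := hP.1 h
  rw [sub_self] at h0
  exact root_ne_zero hab h0.symm

lemma rel_asymm (hP : IsPositiveSystem m n P) {i j : Fin (m+n)}
    (h : rel m n P i j) (h' : rel m n P j i) : False := by
  have : e m n i - e m n j ∈ P ∩ (Neg.neg '' P) :=
    ⟨h, ⟨e m n j - e m n i, h', by rw [neg_sub]⟩⟩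
  rw [hP.2.1] at this
  exact this

lemma rel_total (hP : IsPositiveSystem m n P) {i j : Fin (m+n)} (h : i ≠ j) :
    rel m n P i j ∨ rel m n P j i := by
  have : e m n i - e m n j ∈ P ∪ (Neg.neg '' P) := by
    rw [hP.2.2.1]; exact ⟨i, j, h, rfl⟩
  rcases this with h1 | ⟨w, hw, hw2⟩
  · exact Or.inl h1
  · right
    have hwv : w = e m n j - e m n i := by
      rw [← neg_sub, ← hw2, neg_neg]
    rwa [hwv] at hw

lemma rel_trans (hP : IsPositiveSystem m n P) {i j k : Fin (m+n)}
    (h1 : rel m n P i j) (h2 : rel m n P j k) : rel m n P i k := by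
  have hik : i ≠ k := by
    rintro rfl
    exact rel_asymm hP h1 h2
  have hsum : e m n i - e m n j + (e m n j - e m n k) = e m n i - e m n k := by abel
  have := hP.2.2.2 _ h1 _ h2 (by rw [hsum]; exact ⟨i, k, hik, rfl⟩)
  rwa [hsum] at this

lemma mem_P_iff (hP : IsPositiveSystem m n P) {v : Fin (m+n) → ℚ} :
    v ∈ P ↔ ∃ i j, rel m n P i j ∧ v = e m n i - e m n j := by
  constructor
  · intro hv
    obtain ⟨i, j, hij, rfl⟩ := hP.1 hv
    exact ⟨i, j, hv, rfl⟩
  · rintro ⟨i, j, hij, rfl⟩; exact hij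

lemma indec_iff {Q : Set (Fin (m + n) → ℚ)} {s : Fin (m+n) → Fin (m+n) → Prop}
    (hQ : ∀ v, v ∈ Q ↔ ∃ i j, s i j ∧ v = e m n i - e m n j)
    (hs : ∀ i j, s i j → i ≠ j) (v : Fin (m+n) → ℚ) :
    v ∈ indec m n Q ↔ ∃ i j, s i j ∧ v = e m n i - e m n j ∧ ∀ k, ¬(s i k ∧ s k j) := by
  constructor
  · rintro ⟨hv, hnd⟩
    obtain ⟨i, j, hij, rfl⟩ := (hQ _).mp hv
    refine ⟨i, j, hij, rfl, ?_⟩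
    rintro k ⟨hik, hkj⟩
    exact hnd ⟨e m n i - e m n k, (hQ _).mpr ⟨i, k, hik, rfl⟩,
      e m n k - e m n j, (hQ _).mpr ⟨k, j, hkj, rfl⟩, by abel⟩
  · rintro ⟨i, j, hij, rfl, hmid⟩
    refine ⟨(hQ _).mpr ⟨i, j, hij, rfl⟩, ?_⟩
    rintro ⟨b, hb, c, hc, hbc⟩
    obtain ⟨a1, b1, h1, rfl⟩ := (hQ _).mp hb
    obtain ⟨a2, b2, h2, rfl⟩ := (hQ _).mp hc
    rcases sum_root (hs _ _ h1) (hs _ _ h2) (hs _ _ hij) hbc.symm with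
      ⟨hb1, rfl, rfl⟩ | ⟨hb1, rfl, rfl⟩
    · exact hmid b1 ⟨h1, hb1 ▸ h2⟩
    · exact hmid a1 ⟨hb1 ▸ h2, h1⟩





variable {m n : ℕ} {P : Set (Fin (m + n) → ℚ)}

/-! ### Generic: a strict total order gives a positive system -/

lemma isPos_of_rel {Q : Set (Fin (m + n) → ℚ)} {s : Fin (m+n) → Fin (m+n) → Prop}
    (hQ : ∀ v, v ∈ Q ↔ ∃ i j, s i j ∧ v = e m n i - e m n j)
    (hne : ∀ i j, s i j → i ≠ j) (hasym : ∀ i j, s i j → s j i → False)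
    (htot : ∀ i j, i ≠ j → s i j ∨ s j i)
    (htrans : ∀ i j k, s i j → s j k → s i k) :
    IsPositiveSystem m n Q := by
  refine ⟨?_, ?_, ?_, ?_⟩
  · intro v hv
    obtain ⟨i, j, hij, rfl⟩ := (hQ v).mp hv
    exact ⟨i, j, hne _ _ hij, rfl⟩
  · rw [Set.eq_empty_iff_forall_notMem]
    rintro v ⟨hv, w, hw, hwv⟩
    obtain ⟨i, j, hij, rfl⟩ := (hQ _).mp hv
    obtain ⟨k, l, hkl, rfl⟩ := (hQ _).mp hw
    rw [neg_sub] at hwv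
    obtain ⟨rfl, rfl⟩ := (root_eq_iff (Ne.symm (hne _ _ hkl)) (hne _ _ hij)).mp hwv
    exact hasym _ _ hij hkl
  · ext v
    constructor
    · rintro (hv | ⟨w, hw, rfl⟩)
      · obtain ⟨i, j, hij, rfl⟩ := (hQ _).mp hv
        exact ⟨i, j, hne _ _ hij, rfl⟩
      · obtain ⟨i, j, hij, rfl⟩ := (hQ _).mp hw
        exact ⟨j, i, Ne.symm (hne _ _ hij), by rw [neg_sub]⟩
    · rintro ⟨i, j, hij, rfl⟩
      rcases htot _ _ hij with h | h
      · exact Or.inl ((hQ _).mpr ⟨i, j, h, rfl⟩)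
      · exact Or.inr ⟨e m n j - e m n i, (hQ _).mpr ⟨j, i, h, rfl⟩, by rw [neg_sub]⟩
  · intro a ha b hb hab
    obtain ⟨i, j, hij, rfl⟩ := (hQ _).mp ha
    obtain ⟨k, l, hkl, rfl⟩ := (hQ _).mp hb
    obtain ⟨x, y, hxy, hsum⟩ := hab
    rcases sum_root (hne _ _ hij) (hne _ _ hkl) hxy hsum with ⟨h1, rfl, rfl⟩ | ⟨h1, rfl, rfl⟩
    · exact (hQ _).mpr ⟨x, y, htrans _ _ _ hij (h1 ▸ hkl), hsum⟩
    · exact (hQ _).mpr ⟨x, y, htrans _ _ _ hkl (h1 ▸ hij), hsum⟩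

/-! ### The reflected relation -/

def rel' (m n : ℕ) (P : Set (Fin (m + n) → ℚ)) (p q i j : Fin (m+n)) : Prop :=
  (i = q ∧ j = p) ∨ (rel m n P i j ∧ ¬(i = p ∧ j = q))

variable {p q : Fin (m+n)}

lemma rel'_ne (hP : IsPositiveSystem m n P) (hrpq : rel m n P p q) {i j : Fin (m+n)}
    (h : rel' m n P p q i j) : i ≠ j := by
  rcases h with ⟨rfl, rfl⟩ | ⟨h, -⟩
  · exact Ne.symm (rel_ne hP hrpq)
  · exact rel_ne hP h

lemma rel'_asymm (hP : IsPositiveSystem m n P) (hrpq : rel m n P p q) {i j : Fin (m+n)}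
    (h : rel' m n P p q i j) (h' : rel' m n P p q j i) : False := by
  have hpq : p ≠ q := rel_ne hP hrpq
  rcases h with ⟨hiq, hjp⟩ | ⟨h, hne⟩
  · rcases h' with ⟨hjq, hip⟩ | ⟨h', hne'⟩
    · exact hpq (hjp.symm.trans hjq)
    · exact hne' ⟨hjp, hiq⟩
  · rcases h' with ⟨hjq, hip⟩ | ⟨h', hne'⟩
    · exact hne ⟨hip, hjq⟩
    · exact rel_asymm hP h h'

lemma rel'_total (hP : IsPositiveSystem m n P) {i j : Fin (m+n)} (hij : i ≠ j) :
    rel' m n P p q i j ∨ rel' m n P p q j i := by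
  by_cases h1 : i = p ∧ j = q
  · exact Or.inr (Or.inl ⟨h1.2, h1.1⟩)
  · by_cases h2 : j = p ∧ i = q
    · exact Or.inl (Or.inl ⟨h2.2, h2.1⟩)
    · rcases rel_total hP hij with h | h
      · exact Or.inl (Or.inr ⟨h, h1⟩)
      · exact Or.inr (Or.inr ⟨h, h2⟩)

lemma mid_left (hP : IsPositiveSystem m n P) (hrpq : rel m n P p q)
    (hsimp : ∀ k, ¬(rel m n P p k ∧ rel m n P k q)) {j : Fin (m+n)}
    (h : rel m n P p j) (hj : j ≠ q) : rel m n P q j := by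
  rcases rel_total hP (Ne.symm hj) with h' | h'
  · exact h'
  · exact absurd ⟨h, h'⟩ (hsimp j)

lemma mid_right (hP : IsPositiveSystem m n P) (hrpq : rel m n P p q)
    (hsimp : ∀ k, ¬(rel m n P p k ∧ rel m n P k q)) {i : Fin (m+n)}
    (h : rel m n P i q) (hi : i ≠ p) : rel m n P i p := by
  rcases rel_total hP hi with h' | h'
  · exact h'
  · exact absurd ⟨h', h⟩ (hsimp i)

lemma rel'_trans (hP : IsPositiveSystem m n P) (hrpq : rel m n P p q)
    (hsimp : ∀ k, ¬(rel m n P p k ∧ rel m n P k q)) {i j k : Fin (m+n)}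
    (h1 : rel' m n P p q i j) (h2 : rel' m n P p q j k) : rel' m n P p q i k := by
  have hpq : p ≠ q := rel_ne hP hrpq
  rcases h1 with ⟨hiq, hjp⟩ | ⟨h1, he1⟩
  · rcases h2 with ⟨hjq, hkp⟩ | ⟨h2, he2⟩
    · exact absurd (hjp.symm.trans hjq) hpq
    · -- i = q, j = p, rel p k
      have hkq : k ≠ q := fun hh => he2 ⟨hjp, hh⟩
      refine Or.inr ⟨?_, ?_⟩
      · rw [hiq]
        exact mid_left hP hrpq hsimp (by rw [← hjp]; exact h2) hkq
      · rintro ⟨hip, -⟩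
        exact hpq (hip.symm.trans hiq)
  · rcases h2 with ⟨hjq, hkp⟩ | ⟨h2, he2⟩
    · -- rel i j, j = q, k = p
      have hip : i ≠ p := fun hh => he1 ⟨hh, hjq⟩
      refine Or.inr ⟨?_, ?_⟩
      · rw [hkp]
        exact mid_right hP hrpq hsimp (by rw [← hjq]; exact h1) hip
      · rintro ⟨hip', -⟩
        exact hip hip'
    · have h3 : rel m n P i k := rel_trans hP h1 h2
      refine Or.inr ⟨h3, ?_⟩
      rintro ⟨hip, hkq⟩
      refine hsimp j ⟨?_, ?_⟩
      · rw [← hip]; exact h1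
      · rw [← hkq]; exact h2

lemma mem_P'_iff (hP : IsPositiveSystem m n P) (hrpq : rel m n P p q)
    {v : Fin (m+n) → ℚ} :
    v ∈ (P \ {e m n p - e m n q}) ∪ {-(e m n p - e m n q)} ↔
      ∃ i j, rel' m n P p q i j ∧ v = e m n i - e m n j := by
  have hpq : p ≠ q := rel_ne hP hrpq
  constructor
  · rintro (⟨hv, hne⟩ | hv)
    · obtain ⟨i, j, hij, rfl⟩ := (mem_P_iff hP).mp hv
      refine ⟨i, j, Or.inr ⟨hij, ?_⟩, rfl⟩
      rintro ⟨rfl, rfl⟩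
      exact hne rfl
    · refine ⟨q, p, Or.inl ⟨rfl, rfl⟩, ?_⟩
      rw [Set.mem_singleton_iff] at hv
      rw [hv, neg_sub]
  · rintro ⟨i, j, hij, rfl⟩
    rcases hij with ⟨hiq, hjp⟩ | ⟨h, hne⟩
    · right
      rw [Set.mem_singleton_iff, neg_sub, hiq, hjp]
    · left
      refine ⟨h, ?_⟩
      rw [Set.mem_singleton_iff]
      intro hh
      obtain ⟨h1, h2⟩ := (root_eq_iff (rel_ne hP h) hpq).mp hh
      exact hne ⟨h1, h2⟩





variable {m n : ℕ} {P : Set (Fin (m + n) → ℚ)} {p q : Fin (m+n)}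

lemma B_zero_iff {i j p q : Fin (m+n)} (hij : i ≠ j) (hpq : p ≠ q)
    (hpar : ¬(((p:ℕ) < m) ↔ ((q:ℕ) < m))) :
    B m n (e m n i - e m n j) (e m n p - e m n q) = 0 ↔
      ((i = p ∧ j = q) ∨ (i = q ∧ j = p) ∨ (i ≠ p ∧ i ≠ q ∧ j ≠ p ∧ j ≠ q)) := by
  rw [B_root _ hpq, root_apply, root_apply]
  by_cases h5 : (p:ℕ) < m
  · have h6 : ¬ (q:ℕ) < m := fun hh => hpar (iff_of_true h5 hh)
    rw [if_pos h5, if_neg h6]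
    by_cases h1 : p = i <;> by_cases h2 : p = j <;> by_cases h3 : q = i <;>
      by_cases h4 : q = j <;> simp_all [eq_comm]
  · have h6 : (q:ℕ) < m := not_not.mp (fun hh => hpar (iff_of_false h5 hh))
    rw [if_neg h5, if_pos h6]
    by_cases h1 : p = i <;> by_cases h2 : p = j <;> by_cases h3 : q = i <;>
      by_cases h4 : q = j <;> simp_all [eq_comm]

lemma indec_reflected (hP : IsPositiveSystem m n P) (hrpq : rel m n P p q)
    (hsimp : ∀ k, ¬(rel m n P p k ∧ rel m n P k q))
    (hpar : ¬(((p:ℕ) < m) ↔ ((q:ℕ) < m))) :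
    indec m n ((P \ {e m n p - e m n q}) ∪ {-(e m n p - e m n q)}) =
      {β | β ∈ indec m n P ∧ β ≠ e m n p - e m n q ∧ B m n β (e m n p - e m n q) = 0} ∪
        {γ | ∃ β ∈ indec m n P, B m n β (e m n p - e m n q) ≠ 0 ∧ γ = β + (e m n p - e m n q)} ∪
        {-(e m n p - e m n q)} := by
  have hpq : p ≠ q := rel_ne hP hrpq
  have hne' : ∀ i j, rel' m n P p q i j → i ≠ j := fun i j h => rel'_ne hP hrpq h
  have hmem' : ∀ v, v ∈ (P \ {e m n p - e m n q}) ∪ {-(e m n p - e m n q)} ↔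
      ∃ i j, rel' m n P p q i j ∧ v = e m n i - e m n j := fun v => mem_P'_iff hP hrpq
  have hmemP : ∀ v, v ∈ P ↔ ∃ i j, rel m n P i j ∧ v = e m n i - e m n j :=
    fun v => mem_P_iff hP
  have hneP : ∀ i j, rel m n P i j → i ≠ j := fun i j h => rel_ne hP h
  have hind' := indec_iff hmem' hne'
  have hindP := indec_iff hmemP hneP
  ext v
  rw [hind' v]
  constructor
  · rintro ⟨i, j, h', rfl, hmid'⟩
    rcases h' with ⟨hiq, hjp⟩ | ⟨hrij, hexc⟩
    · right
      rw [Set.mem_singleton_iff, neg_sub, hiq, hjp]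
    · have hij : i ≠ j := rel_ne hP hrij
      by_cases hip : i = p
      · -- v = e p - e j, comes from β = e q - e j
        rw [hip] at hrij hexc hij hmid' ⊢
        have hjq : j ≠ q := fun hh => hexc ⟨rfl, hh⟩
        have hqj : rel m n P q j := mid_left hP hrpq hsimp hrij hjq
        have hβ : e m n q - e m n j ∈ indec m n P := by
          refine (hindP _).mpr ⟨q, j, hqj, rfl, ?_⟩
          rintro k ⟨hqk, hkj⟩
          have hkq : k ≠ q := Ne.symm (rel_ne hP hqk)
          have hkp : k ≠ p := by
            rintro rfl
            exact rel_asymm hP hrpq hqk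
          have hpk : rel m n P p k := rel_trans hP hrpq hqk
          exact hmid' k ⟨Or.inr ⟨hpk, fun hh => hkq hh.2⟩, Or.inr ⟨hkj, fun hh => hkp hh.1⟩⟩
        have hB : B m n (e m n q - e m n j) (e m n p - e m n q) ≠ 0 := by
          intro h0
          rcases (B_zero_iff (rel_ne hP hqj) hpq hpar).mp h0 with
            ⟨h1, -⟩ | ⟨-, h2⟩ | ⟨-, h1, -⟩
          · exact hpq h1.symm
          · exact (Ne.symm hij) h2
          · exact h1 rfl
        exact Or.inl (Or.inr ⟨e m n q - e m n j, hβ, hB, by abel⟩)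
      · by_cases hjq : j = q
        · -- v = e i - e q, comes from β = e i - e p
          rw [hjq] at hrij hexc hij hmid' ⊢
          have hipr : rel m n P i p := mid_right hP hrpq hsimp hrij hip
          have hβ : e m n i - e m n p ∈ indec m n P := by
            refine (hindP _).mpr ⟨i, p, hipr, rfl, ?_⟩
            rintro k ⟨hik, hkp⟩
            have hkp' : k ≠ p := rel_ne hP hkp
            have hkq : k ≠ q := by
              rintro rfl
              exact rel_asymm hP hrpq hkp
            have hkq2 : rel m n P k q := rel_trans hP hkp hrpq
            exact hmid' k ⟨Or.inr ⟨hik, fun hh => hip hh.1⟩, Or.inr ⟨hkq2, fun hh => hkp' hh.1⟩⟩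
          have hB : B m n (e m n i - e m n p) (e m n p - e m n q) ≠ 0 := by
            intro h0
            rcases (B_zero_iff (rel_ne hP hipr) hpq hpar).mp h0 with
              ⟨h1, -⟩ | ⟨h2, -⟩ | ⟨-, -, h1, -⟩
            · exact hip h1
            · exact hij h2
            · exact h1 rfl
          exact Or.inl (Or.inr ⟨e m n i - e m n p, hβ, hB, by abel⟩)
        · -- v stays a simple root orthogonal to α
          have hiq : i ≠ q := by
            intro hh
            refine hmid' p ⟨Or.inl ⟨hh, rfl⟩, Or.inr ⟨?_, ?_⟩⟩
            · refine rel_trans hP hrpq ?_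
              rw [← hh]; exact hrij
            · rintro ⟨-, hjq'⟩; exact hjq hjq'
          have hjp : j ≠ p := by
            intro hh
            refine hmid' q ⟨Or.inr ⟨?_, ?_⟩, Or.inl ⟨rfl, hh⟩⟩
            · refine rel_trans hP ?_ hrpq
              rw [← hh]; exact hrij
            · rintro ⟨hip', -⟩; exact hip hip'
          refine Or.inl (Or.inl ⟨?_, ?_, ?_⟩)
          · refine (hindP _).mpr ⟨i, j, hrij, rfl, ?_⟩
            rintro k ⟨hik, hkj⟩
            exact hmid' k ⟨Or.inr ⟨hik, fun hh => hip hh.1⟩, Or.inr ⟨hkj, fun hh => hjq hh.2⟩⟩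
          · intro hh
            exact hip ((root_eq_iff hij hpq).mp hh).1
          · exact (B_zero_iff hij hpq hpar).mpr (Or.inr (Or.inr ⟨hip, hiq, hjp, hjq⟩))
  · rintro ((⟨hv, hvne, hvB⟩ | ⟨β, hβ, hB, rfl⟩) | hv)
    · -- orthogonal simple roots stay simple
      obtain ⟨i, j, hrij, rfl, hmid⟩ := (hindP _).mp hv
      have hij : i ≠ j := rel_ne hP hrij
      obtain ⟨hip, hiq, hjp, hjq⟩ : i ≠ p ∧ i ≠ q ∧ j ≠ p ∧ j ≠ q := by
        rcases (B_zero_iff hij hpq hpar).mp hvB with ⟨h1, h2⟩ | ⟨h1, h2⟩ | h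
        · exact absurd ((root_eq_iff hij hpq).mpr ⟨h1, h2⟩) hvne
        · rw [h1, h2] at hrij
          exact absurd hrij (fun hh => rel_asymm hP hrpq hh)
        · exact h
      refine ⟨i, j, Or.inr ⟨hrij, fun hh => hip hh.1⟩, rfl, ?_⟩
      rintro k ⟨h1, h2⟩
      rcases h1 with ⟨hiq', -⟩ | ⟨h1, -⟩
      · exact hiq hiq'
      · rcases h2 with ⟨-, hjp'⟩ | ⟨h2, -⟩
        · exact hjp hjp'
        · exact hmid k ⟨h1, h2⟩
    · -- reflected simple roots
      obtain ⟨i, j, hrij, rfl, hmid⟩ := (hindP _).mp hβ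
      have hij : i ≠ j := rel_ne hP hrij
      have hnz : ¬((i = p ∧ j = q) ∨ (i = q ∧ j = p) ∨ (i ≠ p ∧ i ≠ q ∧ j ≠ p ∧ j ≠ q)) :=
        fun hcon => hB ((B_zero_iff hij hpq hpar).mpr hcon)
      push_neg at hnz
      obtain ⟨hn1, hn2, hn3⟩ := hnz
      have hip : i ≠ p := by
        intro hh
        have hjq : j ≠ q := fun hh2 => hB ((B_zero_iff hij hpq hpar).mpr (Or.inl ⟨hh, hh2⟩))
        have hpj : rel m n P p j := by rw [← hh]; exact hrij
        rcases rel_total hP hjq with h' | h'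
        · exact hsimp j ⟨hpj, h'⟩
        · refine hmid q ⟨?_, h'⟩
          rw [hh]; exact hrpq
      have hjq : j ≠ q := by
        intro hh
        have hiq2 : rel m n P i q := by rw [← hh]; exact hrij
        rcases rel_total hP hip with h' | h'
        · refine hmid p ⟨h', ?_⟩
          rw [hh]; exact hrpq
        · exact hsimp i ⟨h', hiq2⟩
      have hor : i = q ∨ j = p := by
        by_contra hcon
        push_neg at hcon
        exact hjq (hn3 hip hcon.1 hcon.2)
      rcases hor with hiq | hjp
      · -- β = e q - e j , β + α = e p - e j
        rw [hiq] at hrij hmid hij ⊢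
        have hjp : j ≠ p := hn2 hiq
        have hveq : e m n q - e m n j + (e m n p - e m n q) = e m n p - e m n j := by abel
        rw [hveq]
        have hpj : rel m n P p j := rel_trans hP hrpq hrij
        refine ⟨p, j, Or.inr ⟨hpj, fun hh => hjq hh.2⟩, rfl, ?_⟩
        rintro k ⟨h1, h2⟩
        rcases h1 with ⟨hpq', -⟩ | ⟨h1, he1⟩
        · exact hpq hpq'
        · have hkq : k ≠ q := fun hh => he1 ⟨rfl, hh⟩
          have hqk : rel m n P q k := mid_left hP hrpq hsimp h1 hkq
          rcases h2 with ⟨hkq', -⟩ | ⟨h2, -⟩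
          · exact hkq hkq'
          · exact hmid k ⟨hqk, h2⟩
      · -- β = e i - e p , β + α = e i - e q
        rw [hjp] at hrij hmid hij ⊢
        have hiq : i ≠ q := fun hh => hn2 hh hjp
        have hveq : e m n i - e m n p + (e m n p - e m n q) = e m n i - e m n q := by abel
        rw [hveq]
        have hiq2 : rel m n P i q := rel_trans hP hrij hrpq
        refine ⟨i, q, Or.inr ⟨hiq2, fun hh => hip hh.1⟩, rfl, ?_⟩
        rintro k ⟨h1, h2⟩
        rcases h2 with ⟨-, hqp'⟩ | ⟨h2, he2⟩
        · exact hpq hqp'.symm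
        · have hkp : k ≠ p := fun hh => he2 ⟨hh, rfl⟩
          have hkp2 : rel m n P k p := mid_right hP hrpq hsimp h2 hkp
          rcases h1 with ⟨hiq', -⟩ | ⟨h1, -⟩
          · exact hiq hiq'
          · exact hmid k ⟨h1, hkp2⟩
    · -- -α is simple
      rw [Set.mem_singleton_iff] at hv
      refine ⟨q, p, Or.inl ⟨rfl, rfl⟩, by rw [hv, neg_sub], ?_⟩
      rintro k ⟨h1, h2⟩
      rcases h1 with ⟨-, hkp⟩ | ⟨h1, -⟩
      · rw [hkp] at h2
        exact rel'_ne hP hrpq h2 rfl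
      · rcases h2 with ⟨hkq, -⟩ | ⟨h2, -⟩
        · exact rel_ne hP h1 hkq.symm
        · exact rel_asymm hP hrpq (rel_trans hP h1 h2)




/-- Odd reflection: if `α` is an odd indecomposable (simple) root of the positive
system `Φ⁺`, then `Φ(α)⁺ = (Φ⁺ \ {α}) ∪ {-α}` is again a positive system, whose
simple roots are `{β ∈ Π : β ≠ α, B(β,α) = 0} ∪ {β + α : β ∈ Π, B(β,α) ≠ 0} ∪ {-α}`. -/
theorem statement13 (m n : ℕ) (P : Set (Fin (m + n) → ℚ))
    (hP : IsPositiveSystem m n P) (α : Fin (m + n) → ℚ)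
    (hα : α ∈ indec m n P) (hodd : IsOddRoot m n α) :
    IsPositiveSystem m n ((P \ {α}) ∪ {-α}) ∧
    indec m n ((P \ {α}) ∪ {-α}) =
      {β | β ∈ indec m n P ∧ β ≠ α ∧ B m n β α = 0} ∪
        {γ | ∃ β ∈ indec m n P, B m n β α ≠ 0 ∧ γ = β + α} ∪ {-α} := by
  obtain ⟨p, q, hpq0, hαeq, hpar⟩ := hodd
  subst hαeq
  have hrpq : rel m n P p q := hα.1
  have hsimp : ∀ k, ¬(rel m n P p k ∧ rel m n P k q) := by
    rintro k ⟨h1, h2⟩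
    exact hα.2 ⟨_, h1, _, h2, by abel⟩
  constructor
  · exact isPos_of_rel (fun v => mem_P'_iff hP hrpq) (fun i j h => rel'_ne hP hrpq h)
      (fun i j h h' => rel'_asymm hP hrpq h h') (fun i j h => rel'_total hP h)
      (fun i j k h1 h2 => rel'_trans hP hrpq hsimp h1 h2)
  · exact indec_reflected hP hrpq hsimp hpar

end Stmt13
end
end
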